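/- Every irrational rotation ℤ^k-action on the k-torus 𝕋^k, given by (n₁,...,n_k)·(x₁,...,x_k) = (x₁+n₁α₁, ..., x_k+n_kα_k) for irrational numbers α₁,...,α_k, has topological Rokhlin dimension at most 2^k − 1: for every n ∈ ℕ there exist 2^k open sets U₁,...,U_{2^k} in 𝕋^k such that for each i, the translates {g·U̅_i}_{g ∈ {0,...,n−1}^k} are pairwise disjoint, and the union ∪_i ∪_{g ∈ {0,...,n−1}^k} g·U_i covers 𝕋^k. -/

import Mathlib

open Set

noncomputable section
abbrev Tc := AddCircle (1:ℝ)

lemma coe_eq_coe (u v : ℝ) : (↑u : Tc) = ↑v ↔ ∃ t : ℤ, u - v = t := by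
  rw [QuotientAddGroup.eq_iff_sub_mem, AddSubgroup.mem_zmultiples_iff]
  constructor
  · rintro ⟨t, ht⟩; exact ⟨t, by simpa using ht.symm⟩
  · rintro ⟨t, ht⟩; exact ⟨t, by simpa using ht.symm⟩

lemma img_eq (c : Tc) (S : Set Tc) :
    (fun x => x + c) '' S = (fun x => x - c) ⁻¹' S := by
  ext x
  constructor
  · rintro ⟨y, hy, rfl⟩; simpa using hy
  · intro h; exact ⟨x - c, h, by simp⟩

lemma exists_close (θ : ℝ) (hθ : Irrational θ) (c ε : ℝ) (hε : 0 < ε) :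
    ∃ q p : ℤ, |(q:ℝ) * θ + p - c| < ε := by
  have hd : Dense ((AddSubgroup.closure ({θ, 1} : Set ℝ) : AddSubgroup ℝ) : Set ℝ) := by
    rcases AddSubgroup.dense_or_cyclic (AddSubgroup.closure {θ, 1}) with h | ⟨a, ha⟩
    · exact h
    · exfalso
      have h1 : (1:ℝ) ∈ AddSubgroup.closure ({θ, 1} : Set ℝ) :=
        AddSubgroup.subset_closure (by simp)
      have hθm : θ ∈ AddSubgroup.closure ({θ, 1} : Set ℝ) :=
        AddSubgroup.subset_closure (by simp)
      rw [ha, AddSubgroup.mem_closure_singleton] at h1 hθm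
      obtain ⟨m, hm⟩ := h1
      obtain ⟨l, hl⟩ := hθm
      have hm0 : (m:ℝ) ≠ 0 := by
        intro h; rw [zsmul_eq_mul] at hm; rw [h] at hm; simp at hm
      exact hθ ⟨(l : ℚ)/(m : ℚ), by
        push_cast
        rw [zsmul_eq_mul] at hm hl
        field_simp
        linear_combination (↑m:ℝ) * hl - (↑l:ℝ) * hm⟩
  obtain ⟨s, hs, hsd⟩ := hd.exists_dist_lt c hε
  rw [SetLike.mem_coe, AddSubgroup.mem_closure_pair] at hs
  obtain ⟨q, p, rfl⟩ := hs
  refine ⟨q, p, ?_⟩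
  rw [Real.dist_eq, abs_sub_comm] at hsd
  simpa [zsmul_eq_mul] using hsd

set_option maxHeartbeats 2000000 in
lemma oneD (θ : ℝ) (hθ : Irrational θ) (n : ℕ) (hn : 0 < n) :
    ∃ V : Fin 2 → Set Tc,
      (∀ i, IsOpen (V i)) ∧
      (∀ i, ∀ m m' : ℕ, m < n → m' < n → m ≠ m' →
        Disjoint ((fun x => x + (m:ℤ) • ((θ:ℝ) : Tc)) '' closure (V i))
                 ((fun x => x + (m':ℤ) • ((θ:ℝ) : Tc)) '' closure (V i))) ∧
      (∀ x : Tc, ∃ i, ∃ m : ℕ, m < n ∧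
        x ∈ (fun y => y + (m:ℤ) • ((θ:ℝ) : Tc)) '' V i) := by
  classical
  obtain ⟨N, hNdef⟩ : ∃ N : ℝ, N = (n:ℝ) := ⟨_, rfl⟩
  have hN0 : (0:ℝ) < N := by rw [hNdef]; exact_mod_cast hn
  have hNne : N ≠ 0 := ne_of_gt hN0
  have hN1 : (1:ℝ) ≤ N := by rw [hNdef]; exact_mod_cast hn
  have hε : (0:ℝ) < 1/(100*N^2) := by
    apply div_pos one_pos; nlinarith
  obtain ⟨q, p, hqp⟩ := exists_close θ hθ (1/N) (1/(100*N^2)) hε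
  obtain ⟨β, hβdef⟩ : ∃ β : ℝ, β = (q:ℝ) * θ + p := ⟨_, rfl⟩
  obtain ⟨e, hedef⟩ : ∃ e : ℝ, e = β - 1/N := ⟨_, rfl⟩
  have he : |e| ≤ 1/(100*N^2) := by rw [hedef, hβdef]; exact hqp.le
  have hβe : β = 1/N + e := by rw [hedef]; ring
  have hβN : β * N = 1 + e * N := by
    rw [hβe]; field_simp
  have h100 : N * (1/(100*N^2)) * N = 1/100 := by field_simp
  have habs3 : ∀ z : ℝ, 0 ≤ z → z ≤ N → |z*e*N| ≤ 1/100 := by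
    intro z hz0 hzN
    rw [abs_mul, abs_mul, abs_of_pos hN0, abs_of_nonneg hz0]
    calc z * |e| * N ≤ N * (1/(100*N^2)) * N := by gcongr
      _ = 1/100 := h100
  obtain ⟨lo, hloeq⟩ : ∃ lo : Fin 2 → ℝ, lo = fun i => if i = 0 then 0 else 17/(20*N) :=
    ⟨_, rfl⟩
  obtain ⟨hi, hhieq⟩ : ∃ hi : Fin 2 → ℝ, hi = fun i => if i = 0 then 9/(10*N) else 21/(20*N) :=
    ⟨_, rfl⟩
  have hl0 : lo 0 = 0 := by rw [hloeq]; rfl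
  have hh0 : hi 0 = 9/(10*N) := by rw [hhieq]; rfl
  have hl1 : lo 1 = 17/(20*N) := by rw [hloeq]; rfl
  have hh1 : hi 1 = 21/(20*N) := by rw [hhieq]; rfl
  set f : Tc → Tc := fun y => (q:ℤ) • y with hf
  have hfc : Continuous f := continuous_zsmul (q:ℤ)
  set V : Fin 2 → Set Tc := fun i => f ⁻¹' ((fun r : ℝ => (r : Tc)) '' Ioo (lo i) (hi i)) with hV
  have hkey : ∀ (m : ℕ) (x : Tc), f (x - (m:ℤ) • ((θ:ℝ) : Tc)) = f x - (((m:ℝ) * β : ℝ) : Tc) := by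
    intro m x
    have h1 : f (x - (m:ℤ) • ((θ:ℝ) : Tc)) = f x - ((q:ℤ)*(m:ℤ)) • ((θ:ℝ) : Tc) := by
      show (q:ℤ) • (x - (m:ℤ) • ((θ:ℝ):Tc)) = (q:ℤ) • x - ((q:ℤ)*(m:ℤ)) • ((θ:ℝ):Tc)
      rw [smul_sub, smul_smul]
    rw [h1]
    congr 1
    rw [← AddCircle.coe_zsmul]
    rw [coe_eq_coe]
    exact ⟨-((m:ℤ)*p), by push_cast [hβdef, zsmul_eq_mul]; ring⟩
  have hmem : ∀ (m : ℕ) (x : Tc) (T : Set ℝ),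
      x - (m:ℤ) • ((θ:ℝ) : Tc) ∈ f ⁻¹' ((fun r : ℝ => (r : Tc)) '' T) ↔
        ∃ w ∈ T, f x = (((w + (m:ℝ) * β : ℝ)) : Tc) := by
    intro m x T
    rw [mem_preimage, hkey]
    constructor
    · rintro ⟨w, hw, hweq⟩
      exact ⟨w, hw, by rw [AddCircle.coe_add]; exact sub_eq_iff_eq_add.mp hweq.symm⟩
    · rintro ⟨w, hw, hweq⟩
      refine ⟨w, hw, ?_⟩
      show (w:Tc) = _
      rw [hweq, AddCircle.coe_add]; abel
  refine ⟨V, ?_, ?_, ?_⟩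
  · intro i
    apply hfc.isOpen_preimage
    exact QuotientAddGroup.isOpenMap_coe _ isOpen_Ioo
  · -- disjointness
    intro i m m' hm hm' hne
    have hclo : closure (V i) ⊆ f ⁻¹' ((fun r : ℝ => (r : Tc)) '' Icc (lo i) (hi i)) := by
      apply closure_minimal
      · exact preimage_mono (image_mono Ioo_subset_Icc_self)
      · exact (((isCompact_Icc).image (AddCircle.continuous_mk' (p := (1:ℝ)))).isClosed).preimage hfc
    rw [img_eq, img_eq, Set.disjoint_left]
    intro x hx hx'
    obtain ⟨w, hw, hweq⟩ := (hmem m x (Icc (lo i) (hi i))).mp (hclo hx)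
    obtain ⟨w', hw', hweq'⟩ := (hmem m' x (Icc (lo i) (hi i))).mp (hclo hx')
    have hcc : ((w + (m:ℝ)*β : ℝ) : Tc) = ((w' + (m':ℝ)*β : ℝ) : Tc) := by
      rw [← hweq, ← hweq']
    rw [coe_eq_coe] at hcc
    obtain ⟨t, ht⟩ := hcc
    set d : ℤ := (m:ℤ) - m' with hd
    have hd0 : d ≠ 0 := sub_ne_zero.mpr (by exact_mod_cast hne)
    set s : ℤ := d - t * n with hs
    have hs0 : s ≠ 0 := by
      intro h
      have hdt : d = t * n := by omega
      rcases lt_trichotomy t 0 with h' | h' | h'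
      · have h2 : t * (n:ℤ) ≤ -n := by nlinarith
        omega
      · rw [h', zero_mul] at hdt; omega
      · have h2 : (n:ℤ) ≤ t * n := le_mul_of_one_le_left (by positivity) h'
        omega
    have hs1 : (1:ℝ) ≤ |(s:ℝ)| := by
      have h1 : (1:ℤ) ≤ |s| := by
        rcases lt_or_gt_of_ne hs0 with h' | h'
        · rw [abs_of_neg h']; omega
        · rw [abs_of_pos h']; omega
      exact_mod_cast h1
    have hsR : (s:ℝ) = (m:ℝ) - (m':ℝ) - (t:ℝ)*N := by
      rw [hs, hd, hNdef]; push_cast; ring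
    have hseq : (s:ℝ) = -(N*(w - w')) - ((m:ℝ) - (m':ℝ))*e*N := by
      rw [hsR]
      linear_combination N * ht - ((m:ℝ) - (m':ℝ)) * hβN
    have hwl : |w - w'| ≤ 9/(10*N) := by
      have hlen : hi i - lo i ≤ 9/(10*N) := by
        have hi01 : i = 0 ∨ i = 1 := by
          rcases i with ⟨iv, hv⟩
          interval_cases iv
          · exact Or.inl rfl
          · exact Or.inr rfl
        rcases hi01 with rfl | rfl
        · rw [hh0, hl0]; simp
        · rw [hh1, hl1, div_sub_div_same]
          rw [div_le_div_iff₀ (by positivity) (by positivity)]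
          nlinarith
      exact abs_sub_le_iff.mpr ⟨by linarith [hw.1, hw.2, hw'.1, hw'.2],
        by linarith [hw.1, hw.2, hw'.1, hw'.2]⟩
    have hdN : |(m:ℝ) - (m':ℝ)| ≤ N := by
      have hmR : (m:ℝ) < N := by rw [hNdef]; exact_mod_cast hm
      have hmR' : (m':ℝ) < N := by rw [hNdef]; exact_mod_cast hm'
      have hm0R : (0:ℝ) ≤ (m:ℝ) := Nat.cast_nonneg m
      have hm0R' : (0:ℝ) ≤ (m':ℝ) := Nat.cast_nonneg m'
      rw [abs_le]
      constructor
      · linarith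
      · linarith
    have hb1 : |N*(w-w')| ≤ 9/10 := by
      rw [abs_mul, abs_of_pos hN0]
      calc N * |w - w'| ≤ N * (9/(10*N)) := by gcongr
        _ = 9/10 := by field_simp
    have hb2 : |((m:ℝ) - (m':ℝ))*e*N| ≤ 1/100 := by
      rw [abs_mul, abs_mul, abs_of_pos hN0]
      calc |(m:ℝ) - (m':ℝ)| * |e| * N ≤ N * (1/(100*N^2)) * N := by gcongr
        _ = 1/100 := h100
    have habs : |(s:ℝ)| ≤ 9/10 + 1/100 := by
      rw [hseq, sub_eq_add_neg]
      refine (abs_add_le _ _).trans ?_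
      rw [abs_neg, abs_neg]
      linarith
    linarith
  · -- covering
    intro x
    obtain ⟨r, rfl⟩ := QuotientAddGroup.mk_surjective x
    set y : ℝ := Int.fract ((q:ℝ) * r) with hy
    have hy0 : 0 ≤ y := Int.fract_nonneg _
    have hy1 : y < 1 := Int.fract_lt_one _
    have hfx : f ((r:ℝ) : Tc) = ((y:ℝ) : Tc) := by
      show (q:ℤ) • ((r:ℝ):Tc) = _
      rw [← AddCircle.coe_zsmul, coe_eq_coe]
      exact ⟨⌊(q:ℝ)*r⌋, by rw [hy, zsmul_eq_mul]; exact Int.self_sub_fract _⟩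
    set j : ℕ := (⌊y * N⌋).toNat with hj
    have hfl0 : 0 ≤ ⌊y * N⌋ := Int.floor_nonneg.mpr (mul_nonneg hy0 hN0.le)
    have hjR : (j:ℝ) = (⌊y*N⌋ : ℝ) := by rw [hj]; exact_mod_cast Int.toNat_of_nonneg hfl0
    have hj1 : (j:ℝ) ≤ y*N := by rw [hjR]; exact Int.floor_le _
    have hj2 : y*N < (j:ℝ) + 1 := by rw [hjR]; exact Int.lt_floor_add_one _
    have hyN : y * N < N := by nlinarith
    have hjn : j < n := by
      have h1 : ⌊y*N⌋ < (n:ℤ) := Int.floor_lt.mpr (by push_cast; rw [← hNdef]; exact hyN)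
      omega
    have hjNR : (j:ℝ) ≤ N := by linarith
    obtain ⟨c, hc⟩ : ∃ c : ℝ, c = y - (j:ℝ) * β := ⟨_, rfl⟩
    have hcN : c * N = y*N - (j:ℝ) - (j:ℝ)*e*N := by
      rw [hc]; linear_combination (-(j:ℝ)) * hβN
    have hZ : |(j:ℝ)*e*N| ≤ 1/100 := habs3 _ (Nat.cast_nonneg j) hjNR
    have hZ' := abs_le.mp hZ
    have heN : |e*N| ≤ 1/100 := by
      have h1 := habs3 1 one_pos.le hN1
      simpa using h1
    have heN' := abs_le.mp heN
    rcases le_or_gt (c*N) 0 with hc0 | hc0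
    · rcases Nat.eq_zero_or_pos j with hj0 | hj0
      · -- case D : j = 0, y = 0
        have hjc : (j:ℝ) = 0 := by rw [hj0]; simp
        have hcy : c = y := by rw [hc, hjc]; ring
        have hyy : y = 0 := by nlinarith
        have hZn : |(N-1)*e*N| ≤ 1/100 := habs3 _ (by linarith) (by linarith)
        have hZn' := abs_le.mp hZn
        have hwN : (1/N - (N-1)*e)*N = 1 - (N-1)*e*N := by field_simp
        refine ⟨1, n - 1, by omega, ?_⟩
        rw [img_eq]
        refine (hmem (n-1) _ _).mpr ⟨1/N - (N-1)*e, ?_, ?_⟩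
        · rw [hl1, hh1]
          constructor
          · rw [← div_div, div_lt_iff₀ hN0, hwN]
            linarith
          · rw [← div_div, lt_div_iff₀ hN0, hwN]
            linarith
        · rw [hfx, coe_eq_coe]
          refine ⟨-1, ?_⟩
          have hnc : ((n-1 : ℕ) : ℝ) = N - 1 := by
            rw [Nat.cast_sub hn, hNdef]; simp
          rw [hyy, hnc, hβe]
          push_cast
          field_simp
          ring
      · -- case C : j ≥ 1
        have hwN : (c + β)*N = c*N + 1 + e*N := by
          rw [add_mul, hβN]; ring
        have hclow : -(1/100) ≤ c*N := by
          rw [hcN]; linarith [hZ'.1]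
        refine ⟨1, j - 1, by omega, ?_⟩
        rw [img_eq]
        refine (hmem (j-1) _ _).mpr ⟨c + β, ?_, ?_⟩
        · rw [hl1, hh1]
          constructor
          · rw [← div_div, div_lt_iff₀ hN0, hwN]
            linarith [heN'.1]
          · rw [← div_div, lt_div_iff₀ hN0, hwN]
            linarith [heN'.2]
        · rw [hfx, coe_eq_coe]
          refine ⟨0, ?_⟩
          have hjc : ((j-1 : ℕ) : ℝ) = (j:ℝ) - 1 := by
            rw [Nat.cast_sub hj0]; simp
          rw [hjc, hc]
          push_cast
          ring
    · rcases lt_or_ge (c*N) (9/10) with hcA | hcB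
      · -- case A
        refine ⟨0, j, hjn, ?_⟩
        rw [img_eq]
        refine (hmem j _ _).mpr ⟨c, ?_, ?_⟩
        · rw [hl0, hh0]
          constructor
          · by_contra hcon
            push_neg at hcon
            nlinarith
          · rw [← div_div, lt_div_iff₀ hN0]
            linarith
        · rw [hfx, coe_eq_coe]
          exact ⟨0, by rw [hc]; push_cast; ring⟩
      · -- case B
        refine ⟨1, j, hjn, ?_⟩
        rw [img_eq]
        refine (hmem j _ _).mpr ⟨c, ?_, ?_⟩
        · rw [hl1, hh1]
          constructor
          · rw [← div_div, div_lt_iff₀ hN0]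
            linarith
          · rw [← div_div, lt_div_iff₀ hN0, hcN]
            linarith [hZ'.2, hj2]
        · rw [hfx, coe_eq_coe]
          exact ⟨0, by rw [hc]; push_cast; ring⟩

lemma imgk_eq {k : ℕ} (c : Fin k → Tc) (S : Set (Fin k → Tc)) :
    (fun x (j : Fin k) => x j + c j) '' S = (fun x (j : Fin k) => x j - c j) ⁻¹' S := by
  ext x
  constructor
  · rintro ⟨y, hy, rfl⟩
    simpa using hy
  · intro h
    exact ⟨fun j => x j - c j, h, by funext j; simp⟩


/-- an irrational rotation `ℤ^k`-action on the `k`-torus `𝕋^k` has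
topological Rokhlin dimension at most `2^k - 1`: for every `n` there exist `2^k` open
sets each inducing an `[n]`-tower (pairwise disjoint translates of the closure by
`g ∈ {0,…,n-1}^k`), whose towers cover `𝕋^k`. -/
theorem stmt10 (k : ℕ) (hk : 0 < k) (α : Fin k → ℝ) (hα : ∀ j, Irrational (α j))
    (n : ℕ) (hn : 0 < n) :
    ∃ U : Fin (2 ^ k) → Set (Fin k → AddCircle (1:ℝ)),
      (∀ i, IsOpen (U i)) ∧
      (∀ i, ∀ g g' : Fin k → ℕ, (∀ j, g j < n) → (∀ j, g' j < n) → g ≠ g' →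
        Disjoint
          ((fun x (j : Fin k) => x j + (g j : ℤ) • (↑(α j) : AddCircle (1:ℝ))) ''
            closure (U i))
          ((fun x (j : Fin k) => x j + (g' j : ℤ) • (↑(α j) : AddCircle (1:ℝ))) ''
            closure (U i))) ∧
      ∀ x : Fin k → AddCircle (1:ℝ), ∃ i, ∃ g : Fin k → ℕ, (∀ j, g j < n) ∧
        x ∈ (fun y (j : Fin k) => y j + (g j : ℤ) • (↑(α j) : AddCircle (1:ℝ))) '' U i := by
  classical
  choose V hop hdis hcov using fun j : Fin k => oneD (α j) (hα j) n hn
  refine ⟨fun i => univ.pi (fun j => V j (finFunctionFinEquiv.symm i j)), ?_, ?_, ?_⟩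
  · intro i
    exact isOpen_set_pi finite_univ (fun j _ => hop j _)
  · intro i g g' hg hg' hne
    obtain ⟨j0, hj0⟩ := Function.ne_iff.mp hne
    rw [closure_pi_set]
    rw [imgk_eq (fun j => (g j : ℤ) • ((α j : ℝ) : Tc)),
        imgk_eq (fun j => (g' j : ℤ) • ((α j : ℝ) : Tc)), Set.disjoint_left]
    intro x hx hx'
    rw [mem_preimage, Set.mem_univ_pi] at hx hx'
    have hD := hdis j0 (finFunctionFinEquiv.symm i j0) (g j0) (g' j0) (hg j0) (hg' j0) hj0
    rw [img_eq, img_eq] at hD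
    exact Set.disjoint_left.mp hD (hx j0) (hx' j0)
  · intro x
    choose iv mv hmlt hmem using fun j => hcov j (x j)
    refine ⟨finFunctionFinEquiv iv, mv, hmlt, ?_⟩
    rw [imgk_eq (fun j => (mv j : ℤ) • ((α j : ℝ) : Tc)), mem_preimage, Set.mem_univ_pi]
    intro j
    rw [Equiv.symm_apply_apply]
    have h1 := hmem j
    rw [img_eq] at h1
    exact h1
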